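/- Let N be an odd positive integer, k an integer, a₂ ∈ ℂ, n ≥ 1 an integer, and α, β odd integers with 2^n ∣ αβN + 1. Let f : ℍ → ℂ satisfy Pairing Assumption 1, together with f ∣[k] T = f, f ∣[k] W_N = f, f ∣[k] M₂ = f where M₂ = [[2,−1],[−N,(N+1)/2]], f ∣[k] [[2,0],[0,1]] + f ∣[k] [[1,0],[0,2]] + f ∣[k] [[1,1],[0,2]] = a₂ • f, f ∣[k] [[2^{n−1}, α],[βN, (αβN+1)/2^{n−1}]] = f, and f ∣[k] [[2^n, α],[βN, (αβN+1)/2^n]] = f. Then either f ∣[k] γ = f for both matrices γ of the pair P₁, or f ∣[k] γ = f for both matrices γ of the pair P₂ (the matrices of P₁ and P₂ regarded as rational matrices with positive determinant). -/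

import Mathlib

open Matrix UpperHalfPlane Complex
open scoped ModularForm MatrixGroups

/-- The element of `GL(2, ℝ)⁺` with entries `[[a, b], [c, d]]` and positive determinant. -/
noncomputable def glp (a b c d : ℝ) (h : 0 < a * d - b * c) : GL(2, ℝ)⁺ :=
  ⟨Matrix.GeneralLinearGroup.mkOfDetNeZero !![a, b; c, d]
      (by rw [Matrix.det_fin_two_of]; exact ne_of_gt h),
   by
    rw [Matrix.mem_glpos]
    show (0:ℝ) < ((Matrix.GeneralLinearGroup.det _ : ℝˣ) : ℝ)
    rw [Matrix.GeneralLinearGroup.val_det_apply]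
    show (0:ℝ) < Matrix.det !![a, b; c, d]
    rw [Matrix.det_fin_two_of]; exact h⟩

noncomputable instance glposSlashAction : SlashAction ℤ GL(2, ℝ)⁺ (ℍ → ℂ) :=
  monoidHomSlashAction (Subgroup.subtype _)

lemma det_pos_of_eq_one {a b c d : ℝ} (h : a * d - b * c = 1) : 0 < a * d - b * c := by
  rw [h]; norm_num

lemma det_pos_mul {a b c d a' b' c' d' : ℝ} (h1 : 0 < a * d - b * c)
    (h2 : 0 < a' * d' - b' * c') :
    0 < (a*a'+b*c') * (c*b'+d*d') - (a*b'+b*d') * (c*a'+d*c') := by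
  nlinarith [mul_pos h1 h2]

lemma glp_mul (a b c d a' b' c' d' : ℝ) (h1 : 0 < a * d - b * c)
    (h2 : 0 < a' * d' - b' * c') :
    glp a b c d h1 * glp a' b' c' d' h2 =
      glp (a*a'+b*c') (a*b'+b*d') (c*a'+d*c') (c*b'+d*d') (det_pos_mul h1 h2) := by
  apply Subtype.ext
  apply Units.ext
  show (!![a, b; c, d] : Matrix (Fin 2) (Fin 2) ℝ) * !![a', b'; c', d'] = _
  rw [Matrix.mul_fin_two]
  rfl

lemma glp_congr {a b c d a' b' c' d' : ℝ} {h : 0 < a * d - b * c}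
    {h' : 0 < a' * d' - b' * c'} (ha : a = a') (hb : b = b') (hc : c = c')
    (hd : d = d') : glp a b c d h = glp a' b' c' d' h' := by
  apply Subtype.ext
  apply Units.ext
  show (!![a, b; c, d] : Matrix (Fin 2) (Fin 2) ℝ) = !![a', b'; c', d']
  rw [ha, hb, hc, hd]

lemma slash_cancel {k : ℤ} {f g : ℍ → ℂ} (A : GL(2, ℝ)⁺)
    (h : f ∣[k] A = g ∣[k] A) : f = g := by
  have h2 := congrArg (fun x : ℍ → ℂ => x ∣[k] A⁻¹) h
  rwa [← SlashAction.slash_mul, ← SlashAction.slash_mul, mul_inv_cancel,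
    SlashAction.slash_one, SlashAction.slash_one] at h2

/-- Under Pairing Assumption 1 and the hypotheses of the process, the four remaining slashed terms
pair up so that either both matrices of the pair `P₁` or both matrices of the pair `P₂` leave `f`
invariant. -/
theorem slash_pairing_step (N : ℕ) (hN : 0 < N) (hNodd : Odd N) (k : ℤ) (a₂ : ℂ)
    (n : ℕ) (hn : 1 ≤ n) (α β : ℤ) (hα : Odd α) (hβ : Odd β)
    (hdvd : ((2:ℤ)^n) ∣ α * β * N + 1) (f : ℍ → ℂ)
    (hPA1 : ∀ A B C D : GL(2, ℝ)⁺,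
      f ∣[k] A + f ∣[k] B = f ∣[k] C + f ∣[k] D →
        (f ∣[k] A = f ∣[k] C ∧ f ∣[k] B = f ∣[k] D) ∨
        (f ∣[k] A = f ∣[k] D ∧ f ∣[k] B = f ∣[k] C))
    (hT : f ∣[k] glp 1 1 0 1 (by norm_num) = f)
    (hW : f ∣[k] glp 1 0 (N:ℝ) 1 (by norm_num) = f)
    (hM2 : f ∣[k] glp 2 (-1) (-(N:ℝ)) (((N:ℝ)+1)/2)
        (det_pos_of_eq_one (by ring)) = f)
    (hT2 : f ∣[k] glp 2 0 0 1 (by norm_num) + f ∣[k] glp 1 0 0 2 (by norm_num)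
        + f ∣[k] glp 1 1 0 2 (by norm_num) = a₂ • f)
    (hMn1 : f ∣[k] glp ((2:ℝ)^(n-1)) (α:ℝ) ((β:ℝ)*(N:ℝ)) (((α:ℝ)*(β:ℝ)*(N:ℝ)+1)/(2:ℝ)^(n-1))
        (det_pos_of_eq_one (by
          have hne : ((2:ℝ)^(n-1)) ≠ 0 := by positivity
          field_simp; ring)) = f)
    (hMn : f ∣[k] glp ((2:ℝ)^n) (α:ℝ) ((β:ℝ)*(N:ℝ)) (((α:ℝ)*(β:ℝ)*(N:ℝ)+1)/(2:ℝ)^n)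
        (det_pos_of_eq_one (by
          have hne : ((2:ℝ)^n) ≠ 0 := by positivity
          field_simp; ring)) = f) :
    (f ∣[k] glp ((2:ℝ)^(n+1)) (α:ℝ) ((β:ℝ)*(N:ℝ)) (((α:ℝ)*(β:ℝ)*(N:ℝ)+1)/(2:ℝ)^(n+1))
        (det_pos_of_eq_one (by
          have hne : ((2:ℝ)^(n+1)) ≠ 0 := by positivity
          field_simp; ring)) = f ∧
     f ∣[k] glp ((2:ℝ)^(n+1)) ((α:ℝ)-(2:ℝ)^n) (((β:ℝ)-(2:ℝ)^n)*(N:ℝ))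
        ((((α:ℝ)-(2:ℝ)^n)*((β:ℝ)-(2:ℝ)^n)*(N:ℝ)+1)/(2:ℝ)^(n+1))
        (det_pos_of_eq_one (by
          have hne : ((2:ℝ)^(n+1)) ≠ 0 := by positivity
          field_simp; ring)) = f) ∨
    (f ∣[k] glp ((2:ℝ)^(n+1)) ((α:ℝ)-(2:ℝ)^n) ((β:ℝ)*(N:ℝ))
        ((((α:ℝ)-(2:ℝ)^n)*(β:ℝ)*(N:ℝ)+1)/(2:ℝ)^(n+1))
        (det_pos_of_eq_one (by
          have hne : ((2:ℝ)^(n+1)) ≠ 0 := by positivity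
          field_simp; ring)) = f ∧
     f ∣[k] glp ((2:ℝ)^(n+1)) (α:ℝ) (((β:ℝ)-(2:ℝ)^n)*(N:ℝ))
        (((α:ℝ)*((β:ℝ)-(2:ℝ)^n)*(N:ℝ)+1)/(2:ℝ)^(n+1))
        (det_pos_of_eq_one (by
          have hne : ((2:ℝ)^(n+1)) ≠ 0 := by positivity
          field_simp; ring)) = f) := by
  have hm : ((2:ℝ)^(n-1)) ≠ 0 := by positivity
  have en : (2:ℝ)^n = (2:ℝ)^(n-1) * 2 := by
    rw [← pow_succ]; congr 1; omega
  have en1 : (2:ℝ)^(n+1) = (2:ℝ)^(n-1) * 4 := by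
    rw [show n + 1 = (n-1) + 2 by omega, pow_add]; norm_num
  -- the occurring matrices
  set A1 : GL(2, ℝ)⁺ := glp 2 0 0 1 (by norm_num) with hA1
  set A2 : GL(2, ℝ)⁺ := glp 1 0 0 2 (by norm_num) with hA2
  set A3 : GL(2, ℝ)⁺ := glp 1 1 0 2 (by norm_num) with hA3
  set M2 : GL(2, ℝ)⁺ := glp 2 (-1) (-(N:ℝ)) (((N:ℝ)+1)/2)
      (det_pos_of_eq_one (by ring)) with hMM2
  set Mn : GL(2, ℝ)⁺ := glp ((2:ℝ)^n) (α:ℝ) ((β:ℝ)*(N:ℝ))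
      (((α:ℝ)*(β:ℝ)*(N:ℝ)+1)/(2:ℝ)^n)
      (det_pos_of_eq_one (by
        have hne : ((2:ℝ)^n) ≠ 0 := by positivity
        field_simp; ring)) with hMMn
  set Mn1 : GL(2, ℝ)⁺ := glp ((2:ℝ)^(n-1)) (α:ℝ) ((β:ℝ)*(N:ℝ))
      (((α:ℝ)*(β:ℝ)*(N:ℝ)+1)/(2:ℝ)^(n-1))
      (det_pos_of_eq_one (by
        have hne : ((2:ℝ)^(n-1)) ≠ 0 := by positivity
        field_simp; ring)) with hMMn1
  set P1a : GL(2, ℝ)⁺ := glp ((2:ℝ)^(n+1)) (α:ℝ) ((β:ℝ)*(N:ℝ))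
      (((α:ℝ)*(β:ℝ)*(N:ℝ)+1)/(2:ℝ)^(n+1))
      (det_pos_of_eq_one (by
        have hne : ((2:ℝ)^(n+1)) ≠ 0 := by positivity
        field_simp; ring)) with hP1a
  set P1b : GL(2, ℝ)⁺ := glp ((2:ℝ)^(n+1)) ((α:ℝ)-(2:ℝ)^n) (((β:ℝ)-(2:ℝ)^n)*(N:ℝ))
      ((((α:ℝ)-(2:ℝ)^n)*((β:ℝ)-(2:ℝ)^n)*(N:ℝ)+1)/(2:ℝ)^(n+1))
      (det_pos_of_eq_one (by
        have hne : ((2:ℝ)^(n+1)) ≠ 0 := by positivity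
        field_simp; ring)) with hP1b
  set P2a : GL(2, ℝ)⁺ := glp ((2:ℝ)^(n+1)) ((α:ℝ)-(2:ℝ)^n) ((β:ℝ)*(N:ℝ))
      ((((α:ℝ)-(2:ℝ)^n)*(β:ℝ)*(N:ℝ)+1)/(2:ℝ)^(n+1))
      (det_pos_of_eq_one (by
        have hne : ((2:ℝ)^(n+1)) ≠ 0 := by positivity
        field_simp; ring)) with hP2a
  set P2b : GL(2, ℝ)⁺ := glp ((2:ℝ)^(n+1)) (α:ℝ) (((β:ℝ)-(2:ℝ)^n)*(N:ℝ))
      (((α:ℝ)*((β:ℝ)-(2:ℝ)^n)*(N:ℝ)+1)/(2:ℝ)^(n+1))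
      (det_pos_of_eq_one (by
        have hne : ((2:ℝ)^(n+1)) ≠ 0 := by positivity
        field_simp; ring)) with hP2b
  -- matrix identities
  have I1 : A2 * Mn = Mn1 * A1 := by
    rw [hA2, hMMn, hMMn1, hA1, glp_mul, glp_mul]
    exact glp_congr (by simp only [en]; ring) (by ring) (by ring)
      (by simp only [en]; field_simp; ring)
  have I2 : A1 * Mn = P1a * A2 := by
    rw [hA1, hMMn, hP1a, hA2, glp_mul, glp_mul]
    exact glp_congr (by simp only [en, en1]; ring) (by ring) (by ring)
      (by simp only [en, en1]; field_simp; ring)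
  have I3 : A1 * Mn = P2a * A3 := by
    rw [hA1, hMMn, hP2a, hA3, glp_mul, glp_mul]
    exact glp_congr (by simp only [en, en1]; ring)
      (by simp only [en, en1]; field_simp; ring) (by ring)
      (by simp only [en, en1]; field_simp; ring)
  have I4 : M2 * (A3 * Mn) = P1b * A3 := by
    rw [hMM2, hA3, hMMn, hP1b, glp_mul, glp_mul, glp_mul]
    exact glp_congr (by simp only [en, en1]; ring)
      (by simp only [en, en1]; field_simp; ring)
      (by simp only [en, en1]; field_simp; ring)
      (by simp only [en, en1]; field_simp; ring)
  have I5 : M2 * (A3 * Mn) = P2b * A2 := by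
    rw [hMM2, hA3, hMMn, hP2b, glp_mul, glp_mul, glp_mul]
    exact glp_congr (by simp only [en, en1]; ring)
      (by simp only [en, en1]; field_simp; ring)
      (by simp only [en, en1]; field_simp; ring)
      (by simp only [en, en1]; field_simp; ring)
  -- the Hecke relation slashed with Mn
  have key : f ∣[k] (A1 * Mn) + f ∣[k] (A2 * Mn) + f ∣[k] (A3 * Mn)
      = f ∣[k] A1 + f ∣[k] A2 + f ∣[k] A3 := by
    have h1 := congrArg (fun g : ℍ → ℂ => g ∣[k] Mn) hT2
    have hs : (a₂ • f) ∣[k] Mn = a₂ • f ∣[k] Mn := by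
      show (a₂ • f) ∣[k] ((Mn : GL (Fin 2) ℝ)) = a₂ • f ∣[k] ((Mn : GL (Fin 2) ℝ))
      rw [ModularForm.smul_slash]
      have hpos : 0 < (((Mn : GL (Fin 2) ℝ) : Matrix (Fin 2) (Fin 2) ℝ).det) := by
        have := Mn.2
        rw [Matrix.mem_glpos] at this
        simpa [Matrix.GeneralLinearGroup.val_det_apply] using this
      simp [σ, hpos]
    simp only [SlashAction.add_slash, hs] at h1
    rw [hMn, ← SlashAction.slash_mul, ← SlashAction.slash_mul,
      ← SlashAction.slash_mul] at h1
    rw [h1]; exact hT2.symm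
  have e1 : f ∣[k] (A2 * Mn) = f ∣[k] A1 := by
    rw [I1, SlashAction.slash_mul, hMn1]
  have key2 : f ∣[k] (A1 * Mn) + f ∣[k] (A3 * Mn) = f ∣[k] A2 + f ∣[k] A3 := by
    linear_combination key - e1
  have hM2l : ∀ X : GL(2, ℝ)⁺, f ∣[k] (M2 * X) = f ∣[k] X := by
    intro X; rw [SlashAction.slash_mul, hM2]
  rcases hPA1 _ _ _ _ key2 with ⟨c1, c2⟩ | ⟨c1, c2⟩
  · left
    constructor
    · apply slash_cancel A2
      rw [← SlashAction.slash_mul, ← I2]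
      exact c1
    · apply slash_cancel A3
      rw [← SlashAction.slash_mul, ← I4, hM2l]
      exact c2
  · right
    constructor
    · apply slash_cancel A3
      rw [← SlashAction.slash_mul, ← I3]
      exact c1
    · apply slash_cancel A2
      rw [← SlashAction.slash_mul, ← I5, hM2l]
      exact c2
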